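/- Let n ≥ 2, m ≥ 3, and let p : ℤ/mℤ → ℝⁿ be a family of pairwise distinct points. For any family q : ℤ/mℤ → ℝⁿ of pairwise distinct points define the discrete cross ratios g_{ij}(q) = ‖q_j − q_i‖‖q_{j+1} − q_{i+1}‖/(‖q_{i+1} − q_i‖‖q_{j+1} − q_j‖) and the discrete energies E₁ᵐ(q) = Σ_{i≠j} (1/g_{ij}(q))·(1 + ½ΔᵢΔⱼg_{ij}(q)), E₂ᵐ(q) = −Σ_{i≠j} (1/(2g_{ij}(q)))·( (ΔᵢΔⱼg_{ij}(q))·2g_{ij}(q) − (Δᵢg_{ij}(q))(Δⱼg_{ij}(q)) + 1 ), Eᵐ(q) = E₁ᵐ(q) + E₂ᵐ(q) + 4, the sums running over ordered pairs (i,j) of distinct residues mod m. If T(x) = c + R²(x − c)/‖x − c‖² is the inversion in a sphere with center c ∉ {p₁,…,p_m} and radius R > 0, then E₁ᵐ(T∘p) = E₁ᵐ(p), E₂ᵐ(T∘p) = E₂ᵐ(p), and Eᵐ(T∘p) = Eᵐ(p). -/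

import Mathlib

open MeasureTheory Real
open scoped BigOperators

noncomputable section

/-- Discrete cross ratio `g_{ij}(q) = ‖q_j − q_i‖‖q_{j+1} − q_{i+1}‖ /
(‖q_{i+1} − q_i‖‖q_{j+1} − q_j‖)` of a closed polygon `q`. -/
def gijZ {n m : ℕ} (q : ZMod m → EuclideanSpace ℝ (Fin n)) (i j : ZMod m) : ℝ :=
  ‖q j - q i‖ * ‖q (j + 1) - q (i + 1)‖ / (‖q (i + 1) - q i‖ * ‖q (j + 1) - q j‖)

/-- Difference operator in the first index. -/
def dIZ {m : ℕ} (u : ZMod m → ZMod m → ℝ) (i j : ZMod m) : ℝ := u (i + 1) j - u i j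

/-- Difference operator in the second index. -/
def dJZ {m : ℕ} (u : ZMod m → ZMod m → ℝ) (i j : ZMod m) : ℝ := u i (j + 1) - u i j

/-- The discrete energy `E₁ᵐ`. -/
def discE1 {n m : ℕ} [NeZero m] (q : ZMod m → EuclideanSpace ℝ (Fin n)) : ℝ :=
  ∑ i : ZMod m, ∑ j : ZMod m,
    if i = j then 0 else
      (1 / gijZ q i j) * (1 + (1 / 2) * dIZ (dJZ (gijZ q)) i j)

/-- The discrete energy `E₂ᵐ`. -/
def discE2 {n m : ℕ} [NeZero m] (q : ZMod m → EuclideanSpace ℝ (Fin n)) : ℝ :=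
  - ∑ i : ZMod m, ∑ j : ZMod m,
    if i = j then 0 else
      (1 / (2 * gijZ q i j)) *
        (dIZ (dJZ (gijZ q)) i j * (2 * gijZ q i j)
          - dIZ (gijZ q) i j * dJZ (gijZ q) i j + 1)

/-- The discrete Möbius energy `Eᵐ = E₁ᵐ + E₂ᵐ + 4`. -/
def discE {n m : ℕ} [NeZero m] (q : ZMod m → EuclideanSpace ℝ (Fin n)) : ℝ :=
  discE1 q + discE2 q + 4

/-- The discrete energies `E₁ᵐ`, `E₂ᵐ` and `Eᵐ` of a polygon with pairwise
distinct vertices are invariant under inversion in a sphere whose center is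
not a vertex. -/
theorem discrete_energies_inversion_invariant
    (n m : ℕ) [NeZero m] (hn : 2 ≤ n) (hm : 3 ≤ m)
    (p : ZMod m → EuclideanSpace ℝ (Fin n)) (hinj : Function.Injective p)
    (c : EuclideanSpace ℝ (Fin n)) (R : ℝ) (hR : 0 < R)
    (hc : ∀ i : ZMod m, p i ≠ c) :
    letI T : EuclideanSpace ℝ (Fin n) → EuclideanSpace ℝ (Fin n) :=
      fun x => c + (R ^ 2 / ‖x - c‖ ^ 2) • (x - c)
    discE1 (T ∘ p) = discE1 p ∧ discE2 (T ∘ p) = discE2 p ∧ discE (T ∘ p) = discE p := by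
  set T : EuclideanSpace ℝ (Fin n) → EuclideanSpace ℝ (Fin n) :=
    fun x => c + (R ^ 2 / ‖x - c‖ ^ 2) • (x - c) with hTdef
  haveI : Fact (1 < m) := ⟨by omega⟩
  have hT : ∀ x, T x = EuclideanGeometry.inversion c R x := by
    intro x
    simp [hTdef, EuclideanGeometry.inversion, dist_eq_norm, div_pow, vsub_eq_sub, vadd_eq_add,
      add_comm]
  have hdist : ∀ a b : ZMod m,
      ‖(T ∘ p) a - (T ∘ p) b‖ = R ^ 2 / (‖p a - c‖ * ‖p b - c‖) * ‖p a - p b‖ := by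
    intro a b
    have := EuclideanGeometry.dist_inversion_inversion (hc a) (hc b) R
    simpa [Function.comp, hT, dist_eq_norm] using this
  have hsucc : ∀ k : ZMod m, k + 1 ≠ k := by
    intro k h
    have h' : k + 1 = k + 0 := by rw [add_zero]; exact h
    exact one_ne_zero (add_left_cancel h')
  have hedge : ∀ k : ZMod m, ‖p (k + 1) - p k‖ ≠ 0 := by
    intro k
    simpa [sub_eq_zero] using fun h => hsucc k (hinj h)
  have hcne : ∀ k : ZMod m, ‖p k - c‖ ≠ 0 := by
    intro k
    simpa [sub_eq_zero] using hc k
  have key : gijZ (T ∘ p) = gijZ p := by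
    funext i j
    unfold gijZ
    rw [hdist, hdist, hdist, hdist]
    field_simp [hedge i, hedge j, hcne i, hcne j, hcne (i + 1), hcne (j + 1)]
  refine ⟨?_, ?_, ?_⟩ <;>
    simp only [discE, discE1, discE2, dIZ, dJZ, key]
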